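/- Let L ∈ (0,1), set ℓ = 1 − L, and let m be a natural number. Then there exists ε₀ > 0 such that for every ω with (m+1)π/L − ε₀ < ω < (m+1)π/L one has |cos(Lω) − (ℓ·ω/2)·sin(Lω)| > 1; consequently, for such ω there is no θ ∈ ℝ with 2·(cos(Lω) − cos θ) = ℓ·ω·sin(Lω). -/

import Mathlib

theorem gap_below_band_edge
    (L : ℝ) (hL0 : 0 < L) (hL1 : L < 1) (m : ℕ) :
    ∃ ε₀ > (0 : ℝ), ∀ ω : ℝ,
      (m + 1) * Real.pi / L - ε₀ < ω → ω < (m + 1) * Real.pi / L →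
        1 < |Real.cos (L * ω) - (1 - L) * ω / 2 * Real.sin (L * ω)| ∧
        ¬∃ θ : ℝ,
          2 * (Real.cos (L * ω) - Real.cos θ) = (1 - L) * ω * Real.sin (L * ω) := by
  have hpi := Real.pi_pos
  set A : ℝ := (m + 1) * Real.pi / L with hA
  have hApos : 0 < A := by
    apply div_pos _ hL0
    positivity
  set c₀ : ℝ := (1 - L) * A / 4 with hc₀
  have hc₀pos : 0 < c₀ := by
    apply div_pos _ (by norm_num)
    exact mul_pos (by linarith) hApos
  set δ₀ : ℝ := min (Real.pi / 2) (4 * c₀ / Real.pi) with hδ₀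
  clear_value δ₀
  have hδ₀pos : 0 < δ₀ := by
    rw [hδ₀]; exact lt_min (by linarith) (by positivity)
  refine ⟨min (A / 2) (δ₀ / L), lt_min (by linarith) (by positivity), ?_⟩
  intro ω hω1 hω2
  -- basic bounds
  have hωA2 : A / 2 < ω := by
    have := min_le_left (A / 2) (δ₀ / L)
    linarith
  have hωpos : 0 < ω := by linarith
  set δ : ℝ := (m + 1) * Real.pi - L * ω with hδ
  clear_value δ
  have hLωA : L * ω < (m + 1) * Real.pi := by
    have := (lt_div_iff₀ hL0).mp hω2
    linarith [mul_comm ω L]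
  have hδpos : 0 < δ := by rw [hδ]; linarith
  have hδlt : δ < δ₀ := by
    have h1 : A - δ₀ / L < ω := by
      have := min_le_right (A / 2) (δ₀ / L)
      linarith
    have h2 : L * (A - δ₀ / L) < L * ω := by exact mul_lt_mul_of_pos_left h1 hL0
    have h3 : L * A = (m + 1) * Real.pi := by
      rw [hA]; field_simp
    have h4 : L * (δ₀ / L) = δ₀ := by field_simp
    simp [hδ]
    nlinarith [mul_lt_mul_of_pos_left h1 hL0]
  have hδhalf : δ ≤ Real.pi / 2 := le_of_lt (hδlt.trans_le (hδ₀ ▸ min_le_left _ _))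
  have hδc : δ < 4 * c₀ / Real.pi := hδlt.trans_le (hδ₀ ▸ min_le_right _ _)
  set c : ℝ := (1 - L) * ω / 2 with hc
  clear_value c
  have hcge : c₀ ≤ c := by
    rw [hc, hc₀]
    have : (1 - L) * (A / 2) ≤ (1 - L) * ω := by nlinarith
    linarith
  -- key inequality : 1 < cos δ + c * sin δ
  have hsin : 2 / Real.pi * δ ≤ Real.sin δ := Real.mul_le_sin hδpos.le hδhalf
  have hcos : 1 - δ ^ 2 / 2 ≤ Real.cos δ := Real.one_sub_sq_div_two_le_cos
  have hkey : 1 < Real.cos δ + c * Real.sin δ := by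
    have hs0 : 0 ≤ Real.sin δ := le_trans (by positivity) hsin
    have h1 : c₀ * (2 / Real.pi * δ) ≤ c * Real.sin δ := by
      have := mul_le_mul hcge hsin (by positivity) (le_trans hc₀pos.le hcge)
      linarith
    have h2 : δ ^ 2 / 2 < c₀ * (2 / Real.pi * δ) := by
      have h : δ * Real.pi < 4 * c₀ := (lt_div_iff₀ hpi).mp hδc
      have e : c₀ * (2 / Real.pi * δ) = (4 * c₀) * δ / (2 * Real.pi) := by
        field_simp; ring
      rw [e, lt_div_iff₀ (by positivity)]
      nlinarith [mul_lt_mul_of_pos_right h hδpos]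
    nlinarith
  -- rewrite cos, sin at L * ω
  have hLω : L * ω = (m + 1 : ℕ) * Real.pi - δ := by push_cast; simp [hδ]
  have hcosLω : Real.cos (L * ω) = (-1) ^ (m + 1) * Real.cos δ := by
    rw [hLω, Real.cos_nat_mul_pi_sub]
  have hsinLω : Real.sin (L * ω) = -((-1) ^ (m + 1) * Real.sin δ) := by
    rw [hLω, Real.sin_nat_mul_pi_sub]
  have hval : Real.cos (L * ω) - c * Real.sin (L * ω)
      = (-1) ^ (m + 1) * (Real.cos δ + c * Real.sin δ) := by
    rw [hcosLω, hsinLω]; ring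
  have habs : 1 < |Real.cos (L * ω) - c * Real.sin (L * ω)| := by
    rw [hval, abs_mul, abs_pow, abs_neg, abs_one, one_pow, one_mul]
    calc 1 < Real.cos δ + c * Real.sin δ := hkey
    _ ≤ |Real.cos δ + c * Real.sin δ| := le_abs_self _
  refine ⟨habs, ?_⟩
  rintro ⟨θ, hθ⟩
  have : Real.cos θ = Real.cos (L * ω) - c * Real.sin (L * ω) := by
    linear_combination (-1/2 : ℝ) * hθ + Real.sin (L * ω) * hc
  have h1 := Real.neg_one_le_cos θ
  have h2 := Real.cos_le_one θ
  rw [this] at h1 h2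
  exact absurd (abs_le.mpr ⟨h1, h2⟩) (not_le.mpr habs)
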